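/- The matrices A = [[5,2],[2,1]] and B = [[1,2],[2,5]] in SL₂(ℤ) generate a free subgroup of rank 2 of SL₂(ℤ). -/

import Mathlib

open Pointwise

/-- The matrix `A = [[5,2],[2,1]]` as an element of `SL₂(ℤ)`. -/
def matA : Matrix.SpecialLinearGroup (Fin 2) ℤ :=
  ⟨!![5, 2; 2, 1], by norm_num [Matrix.det_fin_two_of]⟩

/-- The matrix `B = [[1,2],[2,5]]` as an element of `SL₂(ℤ)`. -/
def matB : Matrix.SpecialLinearGroup (Fin 2) ℤ :=
  ⟨!![1, 2; 2, 5], by norm_num [Matrix.det_fin_two_of]⟩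

/-- Nonzero integer vectors in the plane. -/
abbrev Vnz := {v : Fin 2 → ℤ // v ≠ 0}

instance : MulAction (Matrix.SpecialLinearGroup (Fin 2) ℤ) Vnz where
  smul g v := ⟨(g : Matrix (Fin 2) (Fin 2) ℤ).mulVec v.1, by
    intro h0
    apply v.2
    have h : ((g⁻¹ * g : Matrix.SpecialLinearGroup (Fin 2) ℤ) :
        Matrix (Fin 2) (Fin 2) ℤ).mulVec v.1 = 0 := by
      rw [Matrix.SpecialLinearGroup.coe_mul, ← Matrix.mulVec_mulVec, h0, Matrix.mulVec_zero]
    simpa using h⟩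
  one_smul v := Subtype.ext (by
    show ((1 : Matrix.SpecialLinearGroup (Fin 2) ℤ) :
        Matrix (Fin 2) (Fin 2) ℤ).mulVec v.1 = v.1
    simp)
  mul_smul g h v := Subtype.ext (by
    show ((g * h : Matrix.SpecialLinearGroup (Fin 2) ℤ) :
        Matrix (Fin 2) (Fin 2) ℤ).mulVec v.1 = _
    rw [Matrix.SpecialLinearGroup.coe_mul, ← Matrix.mulVec_mulVec]
    rfl)

lemma Vnz.smul_coe (g : Matrix.SpecialLinearGroup (Fin 2) ℤ) (v : Vnz) :
    (g • v).1 = (g : Matrix (Fin 2) (Fin 2) ℤ).mulVec v.1 := rfl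

/-- Ping-pong "attracting" sets: slope intervals (1/5, 7/10) and (10/7, 5). -/
def XS : Fin 2 → Set Vnz :=
  ![{v | 0 < (5 * v.1 1 - v.1 0) * (7 * v.1 0 - 10 * v.1 1)},
    {v | 0 < (7 * v.1 1 - 10 * v.1 0) * (5 * v.1 0 - v.1 1)}]

/-- Ping-pong "repelling" sets: slope intervals (-4, -3/2) and (-2/3, -1/4). -/
def YS : Fin 2 → Set Vnz :=
  ![{v | (4 * v.1 0 + v.1 1) * (3 * v.1 0 + 2 * v.1 1) < 0},
    {v | (2 * v.1 0 + 3 * v.1 1) * (v.1 0 + 4 * v.1 1) < 0}]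

lemma Vnz.sq_add_sq_pos (v : Vnz) : 0 < v.1 0 ^ 2 + v.1 1 ^ 2 := by
  obtain ⟨i, hi⟩ := Function.ne_iff.mp v.2
  have h : v.1 0 ≠ 0 ∨ v.1 1 ≠ 0 := by
    fin_cases i
    exacts [Or.inl hi, Or.inr hi]
  rcases h with h | h
  · linarith [sq_pos_of_ne_zero h, sq_nonneg (v.1 1)]
  · linarith [sq_pos_of_ne_zero h, sq_nonneg (v.1 0)]

theorem matA_matB_free :
    Function.Injective ⇑(FreeGroup.lift ![matA, matB] :
      FreeGroup (Fin 2) →* Matrix.SpecialLinearGroup (Fin 2) ℤ) := by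
  apply FreeGroup.injective_lift_of_ping_pong ![matA, matB] XS YS
  · -- nonempty
    intro i
    fin_cases i
    · exact ⟨⟨![5, 2], by intro h; simpa using congrFun h 0⟩, by norm_num [XS]⟩
    · exact ⟨⟨![2, 5], by intro h; simpa using congrFun h 0⟩, by norm_num [XS]⟩
  · -- X pairwise disjoint
    intro i j hij
    fin_cases i <;> fin_cases j <;> simp_all <;>
      · rw [Function.onFun, Set.disjoint_left]
        rintro ⟨v, hv⟩ h1 h2
        simp only [XS, Fin.mk_zero, Fin.mk_one, Matrix.cons_val_zero, Matrix.cons_val_one, Matrix.head_cons,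
          Set.mem_setOf_eq] at h1 h2
        nlinarith [sq_nonneg (v 0 - v 1), sq_nonneg (v 0 + v 1)]
  · -- Y pairwise disjoint
    intro i j hij
    fin_cases i <;> fin_cases j <;> simp_all <;>
      · rw [Function.onFun, Set.disjoint_left]
        rintro ⟨v, hv⟩ h1 h2
        simp only [YS, Fin.mk_zero, Fin.mk_one, Matrix.cons_val_zero, Matrix.cons_val_one, Matrix.head_cons,
          Set.mem_setOf_eq] at h1 h2
        nlinarith [sq_nonneg (v 0 - v 1), sq_nonneg (v 0 + v 1)]
  · -- X vs Y disjoint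
    intro i j
    fin_cases i <;> fin_cases j <;>
      · rw [Set.disjoint_left]
        rintro ⟨v, hv⟩ h1 h2
        simp only [XS, YS, Fin.mk_zero, Fin.mk_one, Matrix.cons_val_zero, Matrix.cons_val_one, Matrix.head_cons,
          Set.mem_setOf_eq] at h1 h2
        nlinarith [sq_nonneg (v 0), sq_nonneg (v 1)]
  · -- hX
    intro i
    fin_cases i <;>
      · rintro _ ⟨⟨v, hv⟩, hmem, rfl⟩
        have hvv : 0 < v 0 ^ 2 + v 1 ^ 2 := Vnz.sq_add_sq_pos ⟨v, hv⟩
        simp only [XS, YS, Fin.mk_zero, Fin.mk_one, Set.mem_compl_iff, Set.mem_setOf_eq, Matrix.cons_val_zero,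
          Matrix.cons_val_one, Matrix.head_cons, not_lt] at hmem ⊢
        simp only [Vnz.smul_coe, Matrix.SpecialLinearGroup.coe_inv]
        simp [Vnz.smul_coe, matA, matB, Matrix.mulVec, dotProduct, Fin.sum_univ_two]
        nlinarith [sq_nonneg (5 * v 0 + 2 * v 1), sq_nonneg (2 * v 0 + 5 * v 1),
          sq_nonneg (v 0 + v 1), sq_nonneg (v 0 - v 1)]
  · -- hY
    intro i
    fin_cases i <;>
      · rintro _ ⟨⟨v, hv⟩, hmem, rfl⟩
        have hvv : 0 < v 0 ^ 2 + v 1 ^ 2 := Vnz.sq_add_sq_pos ⟨v, hv⟩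
        simp only [Pi.inv_apply, XS, YS, Fin.mk_zero, Fin.mk_one, Set.mem_compl_iff, Set.mem_setOf_eq,
          Matrix.cons_val_zero, Matrix.cons_val_one, Matrix.head_cons, not_lt] at hmem ⊢
        simp only [Vnz.smul_coe, Matrix.SpecialLinearGroup.coe_inv]
        simp [Vnz.smul_coe, Matrix.SpecialLinearGroup.coe_inv, matA, matB,
          Matrix.adjugate_fin_two, Matrix.mulVec, dotProduct, Fin.sum_univ_two]
        nlinarith [sq_nonneg (5 * v 0 - 2 * v 1), sq_nonneg (2 * v 0 - 5 * v 1),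
          sq_nonneg (v 0 + v 1), sq_nonneg (v 0 - v 1), sq_nonneg (3 * v 0 - 2 * v 1),
          sq_nonneg (2 * v 0 - 3 * v 1), sq_nonneg (6 * v 0 - 5 * v 1),
          sq_nonneg (5 * v 0 - 6 * v 1)]
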